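/- Let G be a group and σ a 2-cocycle on G. If x ∈ G is σ-regular and y, y' ∈ G satisfy y⁻¹xy = y'⁻¹xy', then σ̃(x, y) = σ̃(x, y'), where σ̃(x,y) = σ(x,y) · conj(σ(y, y⁻¹xy)). -/

import Mathlib

open scoped ComplexConjugate

/-- For a 2-cocycle `σ` on a group `G`, if `x` is `σ`-regular and
`y⁻¹xy = y'⁻¹xy'`, then `σ̃(x, y) = σ̃(x, y')`, where
`σ̃(x,y) = σ(x,y) ⬝ conj (σ(y, y⁻¹xy))`. -/
theorem twisted_cocycle_regular {G : Type*} [Group G] (σ : G → G → ℂ)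
    (hσ_unit : ∀ x y, ‖σ x y‖ = 1)
    (hσ_cocycle : ∀ x y z, σ x y * σ (x * y) z = σ x (y * z) * σ y z)
    (hσ_one : σ 1 1 = 1)
    (σt : G → G → ℂ)
    (hσt : ∀ x y, σt x y = σ x y * conj (σ y (y⁻¹ * x * y)))
    (x : G) (hx_reg : ∀ y : G, x * y = y * x → σ x y = σ y x)
    (y y' : G) (h : y⁻¹ * x * y = y'⁻¹ * x * y') :
    σt x y = σt x y' := by
  have hne : ∀ a b : G, σ a b ≠ 0 := by
    intro a b hz
    have := hσ_unit a b
    rw [hz, norm_zero] at this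
    norm_num at this
  have hconj : ∀ a b : G, conj (σ a b) = (σ a b)⁻¹ := by
    intro a b
    have h1 : σ a b * conj (σ a b) = 1 := by
      rw [Complex.mul_conj]
      norm_cast
      rw [Complex.normSq_eq_norm_sq, hσ_unit]
      norm_num
    exact eq_inv_of_mul_eq_one_right h1
  set g := y' * y⁻¹ with hg_def
  have hgy : g * y = y' := by rw [hg_def]; group
  have hgx : g * x = x * g := by
    have : y' * (y'⁻¹ * x * y') * y⁻¹ = y' * (y⁻¹ * x * y) * y⁻¹ := by rw [h]
    rw [hg_def]
    calc y' * y⁻¹ * x = y' * (y⁻¹ * x * y) * y⁻¹ := by group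
    _ = y' * (y'⁻¹ * x * y') * y⁻¹ := this.symm
    _ = x * (y' * y⁻¹) := by group
  set t := y⁻¹ * x * y with ht
  have hyt : y * t = x * y := by rw [ht]; group
  have C1 := hσ_cocycle x g y
  have C2 := hσ_cocycle g y t
  have C3 := hσ_cocycle g x y
  rw [hgy] at C1
  rw [hyt] at C2
  rw [hgx, ← hx_reg g hgx.symm] at C3
  -- key: σ x y * σ y' t = σ x y' * σ y t
  have hkey : σ x y * σ y' t = σ x y' * σ y t := by
    have h4 : σ x y' * σ g y = σ g (x * y) * σ x y := by
      rw [← C3, ← C1]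
    have hmul : (σ x y * σ y' t) * σ g y = (σ x y' * σ y t) * σ g y := by
      calc (σ x y * σ y' t) * σ g y = σ x y * (σ g y * σ (g * y) t) := by
            rw [hgy]; ring
        _ = σ x y * (σ g (x * y) * σ y t) := by rw [C2]
        _ = (σ g (x * y) * σ x y) * σ y t := by ring
        _ = (σ x y' * σ g y) * σ y t := by rw [h4]
        _ = (σ x y' * σ y t) * σ g y := by ring
    exact mul_right_cancel₀ (hne g y) hmul
  rw [hσt, hσt, ← h, hconj, hconj]
  show σ x y * (σ y t)⁻¹ = σ x y' * (σ y' t)⁻¹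
  rw [← div_eq_mul_inv, ← div_eq_mul_inv, div_eq_div_iff (hne y t) (hne y' t)]
  exact hkey
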